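/- Beckner convolution estimate: for 1 < p < q < ∞, 1 < s_k < p'/q' for k = 1,2, with 1/q + 2/p' = 1/s₁ + 1/s₂ and 2 < p'/q', the bilinear convolution-type operator A[V,f,g](x) = ∫∫ V(x−y₁, x−y₂) f(y₁) g(y₂) dy₁ dy₂ satisfies ‖A[V,f,g]‖_{L^q(ℝ^d)} ≤ ‖V‖_{L^p(ℝ^{2d})} ‖f‖_{L^{s₁}(ℝ^d)} ‖g‖_{L^{s₂}(ℝ^d)}. -/

import Mathlib

open MeasureTheory Real Complex ENNReal

noncomputable section

namespace BecknerAux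

private lemma rpow_comb {x : ℝ≥0∞} {u v : ℝ} (hu : 0 ≤ u) (hv : 0 ≤ v) :
    x ^ u * x ^ v = x ^ (u + v) := (ENNReal.rpow_add_of_nonneg u v hu hv).symm

lemma combine4 (a b c e : ℝ≥0∞) {θ₀ θ₁ θ₂ θ₃ P S₁ S₂ Q : ℝ}
    (hP0 : 0 ≤ P) (hS₁0 : 0 ≤ S₁) (hS₂0 : 0 ≤ S₂) (hQ0 : 0 ≤ Q)
    (h₀ : 0 ≤ θ₀) (h₁ : 0 ≤ θ₁) (h₂ : 0 ≤ θ₂) (h₃ : 0 ≤ θ₃)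
    (hP : P * (θ₀ + θ₁ + θ₂) = 1) (hS₁ : S₁ * (θ₀ + θ₃) = 1)
    (hS₂ : S₂ * (θ₁ + θ₃) = 1) (hQ : Q * (θ₂ + θ₃) = 1) :
    (a ^ P * b ^ S₁) ^ θ₀ * (a ^ P * c ^ S₂) ^ θ₁ * (a ^ P * e ^ Q) ^ θ₂ *
      (b ^ S₁ * c ^ S₂ * e ^ Q) ^ θ₃ = a * b * c * e := by
  have ha : a ^ (P * θ₀) * (a ^ (P * θ₁) * a ^ (P * θ₂)) = a := by
    rw [rpow_comb (by positivity) (by positivity),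
      rpow_comb (by positivity) (by positivity),
      show P * θ₀ + (P * θ₁ + P * θ₂) = 1 by linear_combination hP, ENNReal.rpow_one]
  have hb : b ^ (S₁ * θ₀) * b ^ (S₁ * θ₃) = b := by
    rw [rpow_comb (by positivity) (by positivity),
      show S₁ * θ₀ + S₁ * θ₃ = 1 by linear_combination hS₁, ENNReal.rpow_one]
  have hc : c ^ (S₂ * θ₁) * c ^ (S₂ * θ₃) = c := by
    rw [rpow_comb (by positivity) (by positivity),
      show S₂ * θ₁ + S₂ * θ₃ = 1 by linear_combination hS₂, ENNReal.rpow_one]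
  have he : e ^ (Q * θ₂) * e ^ (Q * θ₃) = e := by
    rw [rpow_comb (by positivity) (by positivity),
      show Q * θ₂ + Q * θ₃ = 1 by linear_combination hQ, ENNReal.rpow_one]
  calc (a ^ P * b ^ S₁) ^ θ₀ * (a ^ P * c ^ S₂) ^ θ₁ * (a ^ P * e ^ Q) ^ θ₂ *
        (b ^ S₁ * c ^ S₂ * e ^ Q) ^ θ₃
      = (a ^ (P * θ₀) * b ^ (S₁ * θ₀)) * (a ^ (P * θ₁) * c ^ (S₂ * θ₁)) *
        (a ^ (P * θ₂) * e ^ (Q * θ₂)) * (b ^ (S₁ * θ₃) * c ^ (S₂ * θ₃) * e ^ (Q * θ₃)) := by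
        simp only [ENNReal.mul_rpow_of_nonneg _ _ h₀, ENNReal.mul_rpow_of_nonneg _ _ h₁,
          ENNReal.mul_rpow_of_nonneg _ _ h₂, ENNReal.mul_rpow_of_nonneg _ _ h₃,
          ← ENNReal.rpow_mul]
    _ = (a ^ (P * θ₀) * (a ^ (P * θ₁) * a ^ (P * θ₂))) * ((b ^ (S₁ * θ₀) * b ^ (S₁ * θ₃)) *
        ((c ^ (S₂ * θ₁) * c ^ (S₂ * θ₃)) * (e ^ (Q * θ₂) * e ^ (Q * θ₃)))) := by ring
    _ = a * (b * (c * e)) := by rw [ha, hb, hc, he]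
    _ = a * b * c * e := by ring

section Group

variable {G : Type*} [MeasurableSpace G] [AddCommGroup G] [MeasurableAdd₂ G]
  [MeasurableSub₂ G] [MeasurableNeg G]
  (μ : Measure G) [SigmaFinite μ] [μ.IsAddLeftInvariant] [μ.IsAddRightInvariant]
  [μ.IsNegInvariant]

lemma iter3 {Ψ : G × G × G → ℝ≥0∞} (hΨ : Measurable Ψ) :
    ∫⁻ a, Ψ a ∂(μ.prod (μ.prod μ)) = ∫⁻ x, ∫⁻ y, ∫⁻ z, Ψ (x, y, z) ∂μ ∂μ ∂μ := by
  rw [lintegral_prod _ hΨ.aemeasurable]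
  refine lintegral_congr fun x => ?_
  exact lintegral_prod _ ((hΨ.comp (measurable_const.prodMk measurable_id)).aemeasurable)

lemma L1 {W₂ : G × G → ℝ≥0∞} {h : G → ℝ≥0∞} (hW₂ : Measurable W₂) (hh : Measurable h) :
    ∫⁻ x, ∫⁻ y, ∫⁻ z, W₂ (x - y, x - z) * h y ∂μ ∂μ ∂μ
      = (∫⁻ w, W₂ w ∂(μ.prod μ)) * ∫⁻ y, h y ∂μ := by
  set k : G → ℝ≥0∞ := fun u => ∫⁻ w, W₂ (u, w) ∂μ with hk_def
  have hk : Measurable k := hW₂.lintegral_prod_right'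
  have hinner : ∀ x y : G, ∫⁻ z, W₂ (x - y, x - z) * h y ∂μ = k (x - y) * h y := by
    intro x y
    rw [lintegral_mul_const (h y) (show Measurable fun z => W₂ (x - y, x - z) from
      hW₂.comp (measurable_const.prodMk (measurable_const.sub measurable_id)))]
    congr 1
    exact (Measure.measurePreserving_sub_left μ x).lintegral_comp
      (show Measurable fun w => W₂ (x - y, w) from
        hW₂.comp (measurable_const.prodMk measurable_id))
  simp only [hinner]
  rw [lintegral_lintegral_swap (((hk.comp (measurable_fst.sub measurable_snd)).mul
    (hh.comp measurable_snd)).aemeasurable)]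
  have hx : ∀ y : G, ∫⁻ x, k (x - y) * h y ∂μ = (∫⁻ u, k u ∂μ) * h y := by
    intro y
    rw [lintegral_mul_const (h y) (show Measurable fun x => k (x - y) from
      hk.comp (measurable_id.sub measurable_const))]
    congr 1
    exact (measurePreserving_sub_right μ y).lintegral_comp hk
  simp only [hx]
  rw [lintegral_const_mul _ hh]
  congr 1
  exact (lintegral_prod _ hW₂.aemeasurable).symm

lemma L2 {W₂ : G × G → ℝ≥0∞} {h : G → ℝ≥0∞} (hW₂ : Measurable W₂) (hh : Measurable h) :
    ∫⁻ x, ∫⁻ y, ∫⁻ z, W₂ (x - y, x - z) * h z ∂μ ∂μ ∂μ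
      = (∫⁻ w, W₂ w ∂(μ.prod μ)) * ∫⁻ z, h z ∂μ := by
  have hswap : ∀ x : G, ∫⁻ y, ∫⁻ z, W₂ (x - y, x - z) * h z ∂μ ∂μ
      = ∫⁻ y, ∫⁻ z, (fun w : G × G => W₂ (w.2, w.1)) (x - y, x - z) * h y ∂μ ∂μ := by
    intro x
    rw [lintegral_lintegral_swap]
    exact ((hW₂.comp ((measurable_const.sub measurable_fst).prodMk
      (measurable_const.sub measurable_snd))).mul (hh.comp measurable_snd)).aemeasurable
  calc ∫⁻ x, ∫⁻ y, ∫⁻ z, W₂ (x - y, x - z) * h z ∂μ ∂μ ∂μ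
      = ∫⁻ x, ∫⁻ y, ∫⁻ z, (fun w : G × G => W₂ (w.2, w.1)) (x - y, x - z) * h y ∂μ ∂μ ∂μ :=
        lintegral_congr fun x => hswap x
    _ = (∫⁻ w, (fun w : G × G => W₂ (w.2, w.1)) w ∂(μ.prod μ)) * ∫⁻ y, h y ∂μ :=
        L1 μ (hW₂.comp (measurable_snd.prodMk measurable_fst)) hh
    _ = (∫⁻ w, W₂ w ∂(μ.prod μ)) * ∫⁻ z, h z ∂μ := by
        congr 1
        exact lintegral_prod_swap W₂

lemma L3 {W₂ : G × G → ℝ≥0∞} {h : G → ℝ≥0∞} (hW₂ : Measurable W₂) (hh : Measurable h) :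
    ∫⁻ x, ∫⁻ y, ∫⁻ z, W₂ (x - y, x - z) * h x ∂μ ∂μ ∂μ
      = (∫⁻ w, W₂ w ∂(μ.prod μ)) * ∫⁻ x, h x ∂μ := by
  set k : G → ℝ≥0∞ := fun u => ∫⁻ w, W₂ (u, w) ∂μ with hk_def
  have hk : Measurable k := hW₂.lintegral_prod_right'
  have hinner : ∀ x y : G, ∫⁻ z, W₂ (x - y, x - z) * h x ∂μ = k (x - y) * h x := by
    intro x y
    rw [lintegral_mul_const (h x) (show Measurable fun z => W₂ (x - y, x - z) from
      hW₂.comp (measurable_const.prodMk (measurable_const.sub measurable_id)))]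
    congr 1
    exact (Measure.measurePreserving_sub_left μ x).lintegral_comp
      (show Measurable fun w => W₂ (x - y, w) from
        hW₂.comp (measurable_const.prodMk measurable_id))
  simp only [hinner]
  have hy : ∀ x : G, ∫⁻ y, k (x - y) * h x ∂μ = (∫⁻ u, k u ∂μ) * h x := by
    intro x
    rw [lintegral_mul_const (h x) (show Measurable fun y => k (x - y) from
      hk.comp (measurable_const.sub measurable_id))]
    congr 1
    exact (Measure.measurePreserving_sub_left μ x).lintegral_comp hk
  simp only [hy]
  rw [lintegral_const_mul _ hh]
  congr 1
  exact (lintegral_prod _ hW₂.aemeasurable).symm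

lemma L4 {h₁ h₂ h₃ : G → ℝ≥0∞} (hh₁ : Measurable h₁) (hh₂ : Measurable h₂)
    (hh₃ : Measurable h₃) :
    ∫⁻ x, ∫⁻ y, ∫⁻ z, h₁ y * h₂ z * h₃ x ∂μ ∂μ ∂μ
      = (∫⁻ y, h₁ y ∂μ) * (∫⁻ z, h₂ z ∂μ) * ∫⁻ x, h₃ x ∂μ := by
  have hz : ∀ x y : G, ∫⁻ z, h₁ y * h₂ z * h₃ x ∂μ = h₁ y * h₃ x * ∫⁻ z, h₂ z ∂μ := by
    intro x y
    rw [lintegral_congr (fun z => show h₁ y * h₂ z * h₃ x = h₁ y * h₃ x * h₂ z by ring),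
      lintegral_const_mul _ hh₂]
  simp only [hz]
  have hyy : ∀ x : G, ∫⁻ y, h₁ y * h₃ x * ∫⁻ z, h₂ z ∂μ ∂μ
      = (h₃ x * ∫⁻ z, h₂ z ∂μ) * ∫⁻ y, h₁ y ∂μ := by
    intro x
    rw [lintegral_congr (fun y =>
      show h₁ y * h₃ x * ∫⁻ z, h₂ z ∂μ = (h₃ x * ∫⁻ z, h₂ z ∂μ) * h₁ y by ring),
      lintegral_const_mul _ hh₁]
  simp only [hyy]
  rw [lintegral_congr (fun x =>
    show (h₃ x * ∫⁻ z, h₂ z ∂μ) * ∫⁻ y, h₁ y ∂μ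
      = ((∫⁻ z, h₂ z ∂μ) * ∫⁻ y, h₁ y ∂μ) * h₃ x by ring),
    lintegral_const_mul _ hh₃]
  ring

/-- The quadrilinear Hölder-type estimate at the heart of Beckner's inequality. -/
lemma tri {W : G × G → ℝ≥0∞} {F Gg φ : G → ℝ≥0∞}
    (hW : Measurable W) (hF : Measurable F) (hGg : Measurable Gg) (hφ : Measurable φ)
    {P S₁ S₂ Q θ₀ θ₁ θ₂ θ₃ : ℝ}
    (hP0 : 0 < P) (hS₁0 : 0 < S₁) (hS₂0 : 0 < S₂) (hQ0 : 0 < Q)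
    (h₀ : 0 ≤ θ₀) (h₁ : 0 ≤ θ₁) (h₂ : 0 ≤ θ₂) (h₃ : 0 ≤ θ₃)
    (hθsum : θ₀ + θ₁ + θ₂ + θ₃ = 1)
    (hP : P * (θ₀ + θ₁ + θ₂) = 1) (hS₁ : S₁ * (θ₀ + θ₃) = 1)
    (hS₂ : S₂ * (θ₁ + θ₃) = 1) (hQ : Q * (θ₂ + θ₃) = 1) :
    ∫⁻ x, (∫⁻ y, ∫⁻ z, W (x - y, x - z) * F y * Gg z ∂μ ∂μ) * φ x ∂μ ≤
      (∫⁻ w, W w ^ P ∂(μ.prod μ)) ^ (1/P) * (∫⁻ y, F y ^ S₁ ∂μ) ^ (1/S₁) *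
      (∫⁻ z, Gg z ^ S₂ ∂μ) ^ (1/S₂) * (∫⁻ x, φ x ^ Q ∂μ) ^ (1/Q) := by
  classical
  set pi3 : Measure (G × G × G) := μ.prod (μ.prod μ) with hpi3
  have hmW : Measurable fun a : G × G × G => W (a.1 - a.2.1, a.1 - a.2.2) :=
    hW.comp ((measurable_fst.sub (measurable_fst.comp measurable_snd)).prodMk
      (measurable_fst.sub (measurable_snd.comp measurable_snd)))
  have hmF : Measurable fun a : G × G × G => F a.2.1 :=
    hF.comp (measurable_fst.comp measurable_snd)
  have hmG : Measurable fun a : G × G × G => Gg a.2.2 :=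
    hGg.comp (measurable_snd.comp measurable_snd)
  have hmφ : Measurable fun a : G × G × G => φ a.1 := hφ.comp measurable_fst
  -- the four Hölder blocks
  set g : Fin 4 → G × G × G → ℝ≥0∞ :=
    ![fun a => W (a.1 - a.2.1, a.1 - a.2.2) ^ P * F a.2.1 ^ S₁,
      fun a => W (a.1 - a.2.1, a.1 - a.2.2) ^ P * Gg a.2.2 ^ S₂,
      fun a => W (a.1 - a.2.1, a.1 - a.2.2) ^ P * φ a.1 ^ Q,
      fun a => F a.2.1 ^ S₁ * Gg a.2.2 ^ S₂ * φ a.1 ^ Q] with hg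
  set Θ : Fin 4 → ℝ := ![θ₀, θ₁, θ₂, θ₃] with hΘ
  have hgmeas : ∀ i, Measurable (g i) := by
    intro i
    fin_cases i
    · exact (hmW.pow_const P).mul (hmF.pow_const S₁)
    · exact (hmW.pow_const P).mul (hmG.pow_const S₂)
    · exact (hmW.pow_const P).mul (hmφ.pow_const Q)
    · exact ((hmF.pow_const S₁).mul (hmG.pow_const S₂)).mul (hmφ.pow_const Q)
  have hΘnn : ∀ i, 0 ≤ Θ i := by
    intro i; fin_cases i <;> simpa [hΘ]
  have hΘsum : ∑ i, Θ i = 1 := by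
    rw [Fin.sum_univ_four]; simpa [hΘ] using hθsum
  -- step 1: the LHS as one integral over the triple product
  have hΨmeas : Measurable fun a : G × G × G =>
      W (a.1 - a.2.1, a.1 - a.2.2) * F a.2.1 * Gg a.2.2 * φ a.1 :=
    ((hmW.mul hmF).mul hmG).mul hmφ
  have step1 : ∫⁻ x, (∫⁻ y, ∫⁻ z, W (x - y, x - z) * F y * Gg z ∂μ ∂μ) * φ x ∂μ
      = ∫⁻ a, W (a.1 - a.2.1, a.1 - a.2.2) * F a.2.1 * Gg a.2.2 * φ a.1 ∂pi3 := by
    rw [iter3 μ hΨmeas]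
    refine lintegral_congr fun x => ?_
    have hin : ∀ y : G, Measurable fun z => W (x - y, x - z) * F y * Gg z :=
      fun y => ((hW.comp (measurable_const.prodMk (measurable_const.sub measurable_id))).mul
        measurable_const).mul hGg
    have houter : Measurable fun y => ∫⁻ z, W (x - y, x - z) * F y * Gg z ∂μ := by
      have : Measurable fun yz : G × G => W (x - yz.1, x - yz.2) * F yz.1 * Gg yz.2 :=
        ((hW.comp ((measurable_const.sub measurable_fst).prodMk
          (measurable_const.sub measurable_snd))).mul (hF.comp measurable_fst)).mul
          (hGg.comp measurable_snd)
      exact this.lintegral_prod_right'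
    rw [← lintegral_mul_const _ houter]
    refine lintegral_congr fun y => ?_
    rw [← lintegral_mul_const _ (hin y)]
  -- step 2: pointwise decomposition and Hölder
  have step2 : ∫⁻ a, W (a.1 - a.2.1, a.1 - a.2.2) * F a.2.1 * Gg a.2.2 * φ a.1 ∂pi3
      ≤ ∏ i, (∫⁻ a, g i a ∂pi3) ^ Θ i := by
    have hdecomp : ∀ a : G × G × G,
        W (a.1 - a.2.1, a.1 - a.2.2) * F a.2.1 * Gg a.2.2 * φ a.1 = ∏ i, g i a ^ Θ i := by
      intro a
      rw [Fin.prod_univ_four]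
      simp only [hg, hΘ, Matrix.cons_val_zero, Matrix.cons_val_one, Matrix.head_cons,
        Matrix.cons_val_two, Matrix.tail_cons, Matrix.cons_val_three]
      exact (combine4 _ _ _ _ hP0.le hS₁0.le hS₂0.le hQ0.le h₀ h₁ h₂ h₃ hP hS₁ hS₂ hQ).symm
    calc ∫⁻ a, W (a.1 - a.2.1, a.1 - a.2.2) * F a.2.1 * Gg a.2.2 * φ a.1 ∂pi3
        = ∫⁻ a, ∏ i, g i a ^ Θ i ∂pi3 := lintegral_congr hdecomp
      _ ≤ ∏ i, (∫⁻ a, g i a ∂pi3) ^ Θ i :=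
          ENNReal.lintegral_prod_norm_pow_le _ (fun i _ => (hgmeas i).aemeasurable) hΘsum
            (fun i _ => hΘnn i)
  -- step 3: compute the block integrals
  have hW2 : Measurable fun w : G × G => W w ^ P := hW.pow_const P
  have hI0 : ∫⁻ a, g 0 a ∂pi3
      = (∫⁻ w, W w ^ P ∂(μ.prod μ)) * ∫⁻ y, F y ^ S₁ ∂μ := by
    rw [hpi3, iter3 μ (hgmeas 0)]
    simpa [hg] using L1 μ hW2 (hF.pow_const S₁)
  have hI1 : ∫⁻ a, g 1 a ∂pi3
      = (∫⁻ w, W w ^ P ∂(μ.prod μ)) * ∫⁻ z, Gg z ^ S₂ ∂μ := by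
    rw [hpi3, iter3 μ (hgmeas 1)]
    simpa [hg] using L2 μ hW2 (hGg.pow_const S₂)
  have hI2 : ∫⁻ a, g 2 a ∂pi3
      = (∫⁻ w, W w ^ P ∂(μ.prod μ)) * ∫⁻ x, φ x ^ Q ∂μ := by
    rw [hpi3, iter3 μ (hgmeas 2)]
    simpa [hg] using L3 μ hW2 (hφ.pow_const Q)
  have hI3 : ∫⁻ a, g 3 a ∂pi3
      = (∫⁻ y, F y ^ S₁ ∂μ) * (∫⁻ z, Gg z ^ S₂ ∂μ) * ∫⁻ x, φ x ^ Q ∂μ := by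
    rw [hpi3, iter3 μ (hgmeas 3)]
    simpa [hg] using L4 μ (hF.pow_const S₁) (hGg.pow_const S₂) (hφ.pow_const Q)
  -- step 4: regroup
  set IW := ∫⁻ w, W w ^ P ∂(μ.prod μ)
  set IF := ∫⁻ y, F y ^ S₁ ∂μ
  set IG := ∫⁻ z, Gg z ^ S₂ ∂μ
  set Iφ := ∫⁻ x, φ x ^ Q ∂μ
  have hreg : ∏ i, (∫⁻ a, g i a ∂pi3) ^ Θ i
      = IW ^ (1/P) * IF ^ (1/S₁) * IG ^ (1/S₂) * Iφ ^ (1/Q) := by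
    rw [Fin.prod_univ_four, hI0, hI1, hI2, hI3]
    have haW : (IW ^ (1/P)) ^ P = IW := by
      rw [← ENNReal.rpow_mul, one_div_mul_cancel hP0.ne', ENNReal.rpow_one]
    have hbF : (IF ^ (1/S₁)) ^ S₁ = IF := by
      rw [← ENNReal.rpow_mul, one_div_mul_cancel hS₁0.ne', ENNReal.rpow_one]
    have hcG : (IG ^ (1/S₂)) ^ S₂ = IG := by
      rw [← ENNReal.rpow_mul, one_div_mul_cancel hS₂0.ne', ENNReal.rpow_one]
    have heφ : (Iφ ^ (1/Q)) ^ Q = Iφ := by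
      rw [← ENNReal.rpow_mul, one_div_mul_cancel hQ0.ne', ENNReal.rpow_one]
    have hΘ0 : Θ 0 = θ₀ := rfl
    have hΘ1 : Θ 1 = θ₁ := rfl
    have hΘ2 : Θ 2 = θ₂ := rfl
    have hΘ3 : Θ 3 = θ₃ := rfl
    rw [hΘ0, hΘ1, hΘ2, hΘ3]
    conv_lhs => rw [← haW, ← hbF, ← hcG, ← heφ]
    exact combine4 _ _ _ _ hP0.le hS₁0.le hS₂0.le hQ0.le h₀ h₁ h₂ h₃ hP hS₁ hS₂ hQ
  rw [step1]
  exact le_of_le_of_eq step2 hreg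

end Group

/-- supremum of truncations -/
lemma sup_min_nat (a : ℝ≥0∞) : ⨆ n : ℕ, min a n = a := by
  refine le_antisymm (iSup_le fun n => min_le_left _ _) ?_
  rcases eq_or_ne a ⊤ with h | h
  · subst h
    by_contra h'
    push_neg at h'
    have hne : (⨆ n : ℕ, min ⊤ (n : ℝ≥0∞)) ≠ ⊤ := h'.ne
    obtain ⟨m, hm⟩ := ENNReal.exists_nat_gt hne
    have : (m : ℝ≥0∞) ≤ ⨆ n : ℕ, min ⊤ (n : ℝ≥0∞) := by
      refine le_trans ?_ (le_iSup (fun n : ℕ => min ⊤ (n : ℝ≥0∞)) m)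
      simp
    exact absurd this hm.not_ge
  · obtain ⟨n, hn⟩ := ENNReal.exists_nat_gt h
    exact le_trans (le_of_eq (min_eq_left hn.le).symm)
      (le_iSup (fun n : ℕ => min a (n : ℝ≥0∞)) n)

/-- Converse Hölder bootstrap. -/
lemma boot {α : Type*} [MeasurableSpace α] {ν : Measure α} [SigmaFinite ν]
    {Φ : α → ℝ≥0∞} (hΦ : Measurable Φ) {M : ℝ≥0∞} {q : ℝ} (hq : 1 < q)
    (H : ∀ φ : α → ℝ≥0∞, Measurable φ →
      ∫⁻ x, Φ x * φ x ∂ν ≤ M * (∫⁻ x, φ x ^ (q/(q-1)) ∂ν) ^ ((q-1)/q)) :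
    (∫⁻ x, Φ x ^ q ∂ν) ^ (1/q) ≤ M := by
  have hq0 : 0 < q := lt_trans one_pos hq
  have hq1 : 0 < q - 1 := by linarith
  set Φn : ℕ → α → ℝ≥0∞ :=
    fun n => (spanningSets ν n).indicator (fun x => min (Φ x) n) with hΦn
  have hmeas : ∀ n, Measurable (Φn n) :=
    fun n => (hΦ.min measurable_const).indicator (measurableSet_spanningSets ν n)
  have hle : ∀ n x, Φn n x ≤ Φ x :=
    fun n x => le_trans (Set.indicator_le_self _ _ x) (min_le_left _ _)
  have hmono : Monotone Φn := by
    intro m n hmn x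
    by_cases hx : x ∈ spanningSets ν m
    · have hx' : x ∈ spanningSets ν n := monotone_spanningSets ν hmn hx
      simp only [hΦn, Set.indicator_of_mem hx, Set.indicator_of_mem hx']
      exact min_le_min le_rfl (by exact_mod_cast Nat.cast_le.2 hmn)
    · simp [hΦn, Set.indicator_of_notMem hx]
  have hsup : ∀ x, ⨆ n, Φn n x = Φ x := by
    intro x
    have hxN : ∃ N, x ∈ spanningSets ν N := by
      have := iUnion_spanningSets ν
      have hx : x ∈ ⋃ i, spanningSets ν i := this ▸ Set.mem_univ x
      exact Set.mem_iUnion.1 hx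
    obtain ⟨N, hN⟩ := hxN
    refine le_antisymm (iSup_le fun n => hle n x) ?_
    have key : ∀ n : ℕ, min (Φ x) n ≤ ⨆ m, Φn m x := by
      intro n
      have hmem : x ∈ spanningSets ν (max N n) :=
        monotone_spanningSets ν (le_max_left _ _) hN
      have : min (Φ x) n ≤ Φn (max N n) x := by
        simp only [hΦn, Set.indicator_of_mem hmem]
        exact min_le_min le_rfl (by exact_mod_cast Nat.cast_le.2 (le_max_right N n))
      exact le_trans this (le_iSup (fun m : ℕ => Φn m x) (max N n))
    calc Φ x = ⨆ n : ℕ, min (Φ x) n := (sup_min_nat _).symm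
      _ ≤ ⨆ m, Φn m x := iSup_le key
  have key : ∀ n, (∫⁻ x, Φn n x ^ q ∂ν) ≤ M ^ q := by
    intro n
    set I := ∫⁻ x, Φn n x ^ q ∂ν with hI
    have Ifin : I ≠ ⊤ := by
      have hb : ∀ x, Φn n x ^ q ≤ (spanningSets ν n).indicator
          (fun _ => ((n : ℝ≥0∞)) ^ q) x := by
        intro x
        by_cases hx : x ∈ spanningSets ν n
        · simp only [hΦn, Set.indicator_of_mem hx]
          exact ENNReal.rpow_le_rpow (min_le_right _ _) hq0.le
        · simp only [hΦn, Set.indicator_of_notMem hx]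
          simp [ENNReal.zero_rpow_of_pos hq0]
      have : I ≤ ((n : ℝ≥0∞)) ^ q * ν (spanningSets ν n) := by
        rw [← lintegral_indicator_const (measurableSet_spanningSets ν n)]
        exact lintegral_mono hb
      refine ne_of_lt (lt_of_le_of_lt this ?_)
      exact ENNReal.mul_lt_top
        (ENNReal.rpow_lt_top_of_nonneg hq0.le (ENNReal.natCast_ne_top n))
        (measure_spanningSets_lt_top ν n)
    have step : I ≤ M * I ^ ((q-1)/q) := by
      have h1 : I ≤ ∫⁻ x, Φ x * (Φn n x ^ (q-1)) ∂ν := by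
        rw [hI]
        refine lintegral_mono fun x => ?_
        have : Φn n x ^ q = Φn n x * Φn n x ^ (q - 1) := by
          rw [show q = 1 + (q-1) by ring, ENNReal.rpow_add_of_nonneg 1 (q-1)
            zero_le_one hq1.le, ENNReal.rpow_one]
          ring_nf
        rw [this]
        exact mul_le_mul_left (hle n x) _
      have h2 := H (fun x => Φn n x ^ (q-1)) ((hmeas n).pow_const (q-1))
      have h3 : (∫⁻ x, (Φn n x ^ (q-1)) ^ (q/(q-1)) ∂ν) = I := by
        rw [hI]
        refine lintegral_congr fun x => ?_
        rw [← ENNReal.rpow_mul]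
        congr 1
        field_simp
      rw [h3] at h2
      exact le_trans h1 h2
    by_cases hI0 : I = 0
    · rw [hI0]; exact zero_le
    · have hIid : I = I ^ (1/q) * I ^ ((q-1)/q) := by
        rw [rpow_comb (by positivity) (by positivity),
          show 1/q + (q-1)/q = 1 by field_simp; ring, ENNReal.rpow_one]
      have hc0 : I ^ ((q-1)/q) ≠ 0 := by
        simp only [ne_eq, ENNReal.rpow_eq_zero_iff, not_or]
        constructor
        · rintro ⟨h, -⟩; exact hI0 h
        · rintro ⟨h, -⟩; exact Ifin h
      have hctop : I ^ ((q-1)/q) ≠ ⊤ := by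
        exact (ENNReal.rpow_lt_top_of_nonneg (by positivity) Ifin).ne
      have : I ^ (1/q) * I ^ ((q-1)/q) ≤ M * I ^ ((q-1)/q) := by
        rw [← hIid]; exact step
      have h4 : I ^ (1/q) ≤ M := (ENNReal.mul_le_mul_iff_left hc0 hctop).1 this
      calc I = (I ^ (1/q)) ^ q := by
            rw [← ENNReal.rpow_mul, one_div_mul_cancel hq0.ne', ENNReal.rpow_one]
        _ ≤ M ^ q := ENNReal.rpow_le_rpow h4 hq0.le
  have hfinal : ∫⁻ x, Φ x ^ q ∂ν ≤ M ^ q := by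
    have heq : ∫⁻ x, Φ x ^ q ∂ν = ⨆ n, ∫⁻ x, Φn n x ^ q ∂ν := by
      rw [← lintegral_iSup (fun n => (hmeas n).pow_const q)
        (fun m n hmn x => ENNReal.rpow_le_rpow (hmono hmn x) hq0.le)]
      refine lintegral_congr fun x => ?_
      rw [← hsup x]
      exact ((ENNReal.orderIsoRpow q hq0).map_iSup fun n => Φn n x)
    rw [heq]
    exact iSup_le key
  calc (∫⁻ x, Φ x ^ q ∂ν) ^ (1/q) ≤ (M ^ q) ^ (1/q) :=
        ENNReal.rpow_le_rpow hfinal (by positivity)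
    _ = M := by rw [← ENNReal.rpow_mul, mul_one_div_cancel hq0.ne', ENNReal.rpow_one]

end BecknerAux

open BecknerAux in
lemma main_aux {E : Type*} [MeasureSpace E] [AddCommGroup E] [MeasurableAdd₂ E]
    [MeasurableSub₂ E] [MeasurableNeg E] [SigmaFinite (volume : Measure E)]
    [(volume : Measure E).IsAddLeftInvariant] [(volume : Measure E).IsAddRightInvariant]
    [(volume : Measure E).IsNegInvariant]
    (p q s₁ s₂ : ℝ)
    (hp : 1 < p) (hpq : p < q)
    (hs₁1 : 1 < s₁) (hs₁2 : s₁ < (p/(p-1))/(q/(q-1)))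
    (hs₂1 : 1 < s₂) (hs₂2 : s₂ < (p/(p-1))/(q/(q-1)))
    (hsum : 1/q + 2/(p/(p-1)) = 1/s₁ + 1/s₂)
    (V : E × E → ℂ) (f g : E → ℂ)
    (hV : MemLp V (ENNReal.ofReal p) volume)
    (hf : MemLp f (ENNReal.ofReal s₁) volume)
    (hg : MemLp g (ENNReal.ofReal s₂) volume) :
    eLpNorm (fun x => ∫ y, ∫ z, V (x - y, x - z) * f y * g z) (ENNReal.ofReal q) volume ≤
      eLpNorm V (ENNReal.ofReal p) volume * eLpNorm f (ENNReal.ofReal s₁) volume *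
        eLpNorm g (ENNReal.ofReal s₂) volume := by
  classical
  -- basic exponent facts
  have hp0 : 0 < p := lt_trans one_pos hp
  have hq : 1 < q := lt_trans hp hpq
  have hq0 : 0 < q := lt_trans one_pos hq
  have hp1 : 0 < p - 1 := by linarith
  have hq1 : 0 < q - 1 := by linarith
  have hs₁0 : 0 < s₁ := lt_trans one_pos hs₁1
  have hs₂0 : 0 < s₂ := lt_trans one_pos hs₂1
  have hQ'1 : 1 < q/(q-1) := by rw [lt_div_iff₀ hq1]; linarith
  have hP'0 : 0 < p/(p-1) := by positivity
  have hs₁p : s₁ < p/(p-1) := lt_of_lt_of_le hs₁2 (div_le_self hP'0.le hQ'1.le)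
  have hs₂p : s₂ < p/(p-1) := lt_of_lt_of_le hs₂2 (div_le_self hP'0.le hQ'1.le)
  have hconj : ∀ s : ℝ, 0 < s → s < p/(p-1) → 1 - 1/p < 1/s := by
    intro s hs0 hsp
    have h := (lt_div_iff₀ hp1).1 hsp
    have e : 1 - 1/p = (p-1)/p := by field_simp
    rw [e, div_lt_div_iff₀ hp0 hs0]
    nlinarith
  have h1s₁ : 1 - 1/p < 1/s₁ := hconj s₁ hs₁0 hs₁p
  have h1s₂ : 1 - 1/p < 1/s₂ := hconj s₂ hs₂0 hs₂p
  -- the exponents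
  set θ₀ : ℝ := 1/s₁ - (1 - 1/p) with hθ₀def
  set θ₁ : ℝ := 1/s₂ - (1 - 1/p) with hθ₁def
  set θ₂ : ℝ := 1/p - 1/q with hθ₂def
  set θ₃ : ℝ := 1 - 1/p with hθ₃def
  have hθ₀ : 0 ≤ θ₀ := by rw [hθ₀def]; linarith
  have hθ₁ : 0 ≤ θ₁ := by rw [hθ₁def]; linarith
  have hθ₂ : 0 ≤ θ₂ := by
    rw [hθ₂def]
    have := one_div_lt_one_div_of_lt hp0 hpq
    linarith
  have hθ₃ : 0 ≤ θ₃ := by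
    rw [hθ₃def]
    have : 1/p < 1 := by rw [div_lt_one hp0]; linarith
    linarith
  have hsum' : 1/s₁ + 1/s₂ = 1/q + 2*(1 - 1/p) := by
    have e : 2/(p/(p-1)) = 2*(1 - 1/p) := by
      have e' : (1 : ℝ) - 1/p = (p-1)/p := by field_simp
      rw [e', div_div_eq_mul_div, mul_div_assoc]
    linarith [hsum, e]
  have hθsum3 : θ₀ + θ₁ + θ₂ = 1/p := by
    rw [hθ₀def, hθ₁def, hθ₂def]; linarith
  have hθsum : θ₀ + θ₁ + θ₂ + θ₃ = 1 := by
    rw [hθ₃def, hθsum3]; ring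
  have hPθ : p * (θ₀ + θ₁ + θ₂) = 1 := by
    rw [hθsum3]; exact mul_one_div_cancel hp0.ne'
  have hS₁θ : s₁ * (θ₀ + θ₃) = 1 := by
    have e : θ₀ + θ₃ = 1/s₁ := by rw [hθ₀def, hθ₃def]; ring
    rw [e]; exact mul_one_div_cancel hs₁0.ne'
  have hS₂θ : s₂ * (θ₁ + θ₃) = 1 := by
    have e : θ₁ + θ₃ = 1/s₂ := by rw [hθ₁def, hθ₃def]; ring
    rw [e]; exact mul_one_div_cancel hs₂0.ne'
  have hQθ : (q/(q-1)) * (θ₂ + θ₃) = 1 := by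
    have e : θ₂ + θ₃ = (q-1)/q := by
      rw [hθ₂def, hθ₃def, sub_div, div_self hq0.ne']; ring
    rw [e, div_mul_div_comm, mul_comm q (q-1), div_self (by positivity : (q-1)*q ≠ 0)]
  have hQ'0 : 0 < q/(q-1) := by positivity
  -- measurable representatives
  have hVm := hV.aestronglyMeasurable
  have hfm := hf.aestronglyMeasurable
  have hgm := hg.aestronglyMeasurable
  set V' : E × E → ℂ := hVm.mk V with hV'def
  set f' : E → ℂ := hfm.mk f with hf'def
  set g' : E → ℂ := hgm.mk g with hg'def
  have hV'meas : Measurable V' := hVm.stronglyMeasurable_mk.measurable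
  have hf'meas : Measurable f' := hfm.stronglyMeasurable_mk.measurable
  have hg'meas : Measurable g' := hgm.stronglyMeasurable_mk.measurable
  set W : E × E → ℝ≥0∞ := fun w => (‖V' w‖₊ : ℝ≥0∞) with hWdef
  set F : E → ℝ≥0∞ := fun y => (‖f' y‖₊ : ℝ≥0∞) with hFdef
  set Gg : E → ℝ≥0∞ := fun z => (‖g' z‖₊ : ℝ≥0∞) with hGgdef
  have hW : Measurable W := hV'meas.enorm
  have hF : Measurable F := hf'meas.enorm
  have hGg : Measurable Gg := hg'meas.enorm
  set Φ : E → ℝ≥0∞ :=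
    fun x => ∫⁻ y, ∫⁻ z, W (x - y, x - z) * F y * Gg z ∂volume ∂volume with hΦdef
  have hinner2meas : Measurable fun xy : E × E =>
      ∫⁻ z, W (xy.1 - xy.2, xy.1 - z) * F xy.2 * Gg z ∂volume := by
    have : Measurable fun w : (E × E) × E =>
        W (w.1.1 - w.1.2, w.1.1 - w.2) * F w.1.2 * Gg w.2 :=
      ((hW.comp ((measurable_fst.fst.sub measurable_fst.snd).prodMk
        (measurable_fst.fst.sub measurable_snd))).mul
        (hF.comp measurable_fst.snd)).mul (hGg.comp measurable_snd)
    exact this.lintegral_prod_right'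
  have hΦmeas : Measurable Φ := hinner2meas.lintegral_prod_right'
  -- a.e. replacement of V by V'
  have haeV : ∀ᵐ x ∂(volume : Measure E), ∀ᵐ y ∂(volume : Measure E),
      ∀ᵐ z ∂(volume : Measure E), V (x - y, x - z) = V' (x - y, x - z) := by
    obtain ⟨N, hSN, hNmeas, hN0⟩ :=
      exists_measurable_superset_of_null (ae_iff.1 hVm.ae_eq_mk)
    set m : E × E × E → E × E := fun a => (a.1 - a.2.1, a.1 - a.2.2) with hmdef
    have hm : Measurable m :=
      (measurable_fst.sub (measurable_fst.comp measurable_snd)).prodMk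
        (measurable_fst.sub (measurable_snd.comp measurable_snd))
    have hslice : ∀ x : E, (volume : Measure (E × E))
        ((fun yz : E × E => (x - yz.1, x - yz.2)) ⁻¹' N) = 0 := by
      intro x
      have hT : MeasurePreserving (Prod.map (fun u : E => x - u) (fun v : E => x - v))
          (volume.prod volume) (volume.prod volume) :=
        (Measure.measurePreserving_sub_left volume x).prod
          (Measure.measurePreserving_sub_left volume x)
      have : (fun yz : E × E => (x - yz.1, x - yz.2))
          = Prod.map (fun u : E => x - u) (fun v : E => x - v) := rfl
      rw [this, Measure.volume_eq_prod, hT.measure_preimage hNmeas.nullMeasurableSet]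
      rw [← Measure.volume_eq_prod]
      exact hN0
    have h3 : (volume : Measure (E × E × E)) (m ⁻¹' N) = 0 := by
      rw [Measure.volume_eq_prod, Measure.prod_apply (hm hNmeas)]
      have : ∀ x : E, (volume : Measure (E × E)) (Prod.mk x ⁻¹' (m ⁻¹' N)) = 0 := by
        intro x
        have e : Prod.mk x ⁻¹' (m ⁻¹' N)
            = (fun yz : E × E => (x - yz.1, x - yz.2)) ⁻¹' N := rfl
        rw [e]; exact hslice x
      simp only [this, lintegral_zero]
    have h4 : ∀ᵐ a ∂(volume : Measure (E × E × E)), m a ∉ N := by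
      rw [ae_iff]
      simp only [not_not]; exact h3
    rw [Measure.volume_eq_prod] at h4
    have h5 := Measure.ae_ae_of_ae_prod h4
    refine h5.mono fun x hx => ?_
    rw [Measure.volume_eq_prod] at hx
    have h6 := Measure.ae_ae_of_ae_prod hx
    refine h6.mono fun y hy => hy.mono fun z hz => ?_
    by_contra hne
    exact hz (hSN hne)
  -- eLpNorm rewriting
  have hofreal : ∀ r : ℝ, 0 < r → (ENNReal.ofReal r ≠ 0 ∧ ENNReal.ofReal r ≠ ⊤) :=
    fun r hr => ⟨(ENNReal.ofReal_pos.2 hr).ne', ENNReal.ofReal_ne_top⟩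
  obtain ⟨hq_ne0, hq_netop⟩ := hofreal q hq0
  obtain ⟨hp_ne0, hp_netop⟩ := hofreal p hp0
  obtain ⟨hs₁_ne0, hs₁_netop⟩ := hofreal s₁ hs₁0
  obtain ⟨hs₂_ne0, hs₂_netop⟩ := hofreal s₂ hs₂0
  rw [eLpNorm_eq_lintegral_rpow_enorm_toReal hq_ne0 hq_netop,
    eLpNorm_eq_lintegral_rpow_enorm_toReal hp_ne0 hp_netop,
    eLpNorm_eq_lintegral_rpow_enorm_toReal hs₁_ne0 hs₁_netop,
    eLpNorm_eq_lintegral_rpow_enorm_toReal hs₂_ne0 hs₂_netop,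
    ENNReal.toReal_ofReal hq0.le, ENNReal.toReal_ofReal hp0.le,
    ENNReal.toReal_ofReal hs₁0.le, ENNReal.toReal_ofReal hs₂0.le]
  simp only [enorm_eq_nnnorm]
  -- replace the norms of V, f, g by those of the measurable representatives
  have hVint : ∫⁻ w, (‖V w‖₊ : ℝ≥0∞) ^ p ∂(volume : Measure (E × E))
      = ∫⁻ w, W w ^ p ∂((volume : Measure E).prod volume) := by
    rw [← Measure.volume_eq_prod]
    refine lintegral_congr_ae ?_
    filter_upwards [hVm.ae_eq_mk] with w hw
    simp only [hWdef]; rw [hw]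
  have hfint : ∫⁻ y, (‖f y‖₊ : ℝ≥0∞) ^ s₁ ∂(volume : Measure E)
      = ∫⁻ y, F y ^ s₁ ∂(volume : Measure E) := by
    refine lintegral_congr_ae ?_
    filter_upwards [hfm.ae_eq_mk] with y hy
    simp only [hFdef]; rw [hy]
  have hgint : ∫⁻ z, (‖g z‖₊ : ℝ≥0∞) ^ s₂ ∂(volume : Measure E)
      = ∫⁻ z, Gg z ^ s₂ ∂(volume : Measure E) := by
    refine lintegral_congr_ae ?_
    filter_upwards [hgm.ae_eq_mk] with z hz
    simp only [hGgdef]; rw [hz]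
  rw [hVint, hfint, hgint]
  -- pointwise a.e. domination of the bilinear operator by Φ
  have hmain : ∀ᵐ x ∂(volume : Measure E),
      (‖∫ y, ∫ z, V (x - y, x - z) * f y * g z‖₊ : ℝ≥0∞) ≤ Φ x := by
    filter_upwards [haeV] with x hx
    calc (‖∫ y, ∫ z, V (x - y, x - z) * f y * g z‖₊ : ℝ≥0∞)
        ≤ ∫⁻ y, (‖∫ z, V (x - y, x - z) * f y * g z‖₊ : ℝ≥0∞) ∂volume :=
          enorm_integral_le_lintegral_enorm _
      _ ≤ ∫⁻ y, ∫⁻ z, (‖V (x - y, x - z) * f y * g z‖₊ : ℝ≥0∞) ∂volume ∂volume :=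
          lintegral_mono fun y => enorm_integral_le_lintegral_enorm _
      _ = ∫⁻ y, ∫⁻ z, (‖V (x - y, x - z)‖₊ : ℝ≥0∞) * (‖f y‖₊ : ℝ≥0∞) *
            (‖g z‖₊ : ℝ≥0∞) ∂volume ∂volume := by
          refine lintegral_congr fun y => lintegral_congr fun z => ?_
          simp [nnnorm_mul, ENNReal.coe_mul]
      _ = Φ x := by
          rw [hΦdef]
          refine lintegral_congr_ae ?_
          filter_upwards [hx, hfm.ae_eq_mk] with y hy hfy
          refine lintegral_congr_ae ?_
          filter_upwards [hy, hgm.ae_eq_mk] with z hz hgz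
          simp only [hWdef, hFdef, hGgdef]
          rw [hz, hfy, hgz]
  -- main estimate
  calc (∫⁻ x, (‖∫ y, ∫ z, V (x - y, x - z) * f y * g z‖₊ : ℝ≥0∞) ^ q ∂volume) ^ (1/q)
      ≤ (∫⁻ x, Φ x ^ q ∂volume) ^ (1/q) := by
        refine ENNReal.rpow_le_rpow ?_ (by positivity)
        refine lintegral_mono_ae (hmain.mono fun x hx => ?_)
        exact ENNReal.rpow_le_rpow hx hq0.le
    _ ≤ (∫⁻ w, W w ^ p ∂((volume : Measure E).prod volume)) ^ (1/p) *
        (∫⁻ y, F y ^ s₁ ∂(volume : Measure E)) ^ (1/s₁) *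
        (∫⁻ z, Gg z ^ s₂ ∂(volume : Measure E)) ^ (1/s₂) := by
        refine boot hΦmeas hq ?_
        intro φ hφ
        have htri := tri (volume : Measure E) hW hF hGg hφ hp0 hs₁0 hs₂0 hQ'0
          hθ₀ hθ₁ hθ₂ hθ₃ hθsum hPθ hS₁θ hS₂θ hQθ
        rw [one_div_div] at htri
        exact htri


/-- Beckner's convolution estimate: for `1 < p < q < ∞`, `1 < s_k < p'/q'`,
`1/q + 2/p' = 1/s₁ + 1/s₂` and `2 < p'/q'`, one has
`‖A[V,f,g]‖_{L^q} ≤ ‖V‖_{L^p(ℝ^{2d})} ‖f‖_{L^{s₁}} ‖g‖_{L^{s₂}}`. -/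
theorem stmt5 (d : ℕ) (hd : 0 < d) (p q s₁ s₂ : ℝ)
    (hp : 1 < p) (hpq : p < q)
    (hs₁ : 1 < s₁ ∧ s₁ < (p/(p-1))/(q/(q-1)))
    (hs₂ : 1 < s₂ ∧ s₂ < (p/(p-1))/(q/(q-1)))
    (hsum : 1/q + 2/(p/(p-1)) = 1/s₁ + 1/s₂)
    (hcone : 2 < (p/(p-1))/(q/(q-1)))
    (V : EuclideanSpace ℝ (Fin d) × EuclideanSpace ℝ (Fin d) → ℂ)
    (f g : EuclideanSpace ℝ (Fin d) → ℂ)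
    (hV : MemLp V (ENNReal.ofReal p) volume)
    (hf : MemLp f (ENNReal.ofReal s₁) volume)
    (hg : MemLp g (ENNReal.ofReal s₂) volume) :
    eLpNorm (fun x => ∫ y, ∫ z, V (x - y, x - z) * f y * g z) (ENNReal.ofReal q) volume ≤
      eLpNorm V (ENNReal.ofReal p) volume * eLpNorm f (ENNReal.ofReal s₁) volume *
        eLpNorm g (ENNReal.ofReal s₂) volume :=
  main_aux p q s₁ s₂ hp hpq hs₁.1 hs₁.2 hs₂.1 hs₂.2 hsum V f g hV hf hg

end
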